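/- Let δ > 0, let X be the line segment from a to b in R, and let Q : [0,1] → R be a curve with Q(0) = a, Q(1) = b, Q(t) lying in the closed interval with endpoints a and b for all t, and d_F(Q,X) ≤ δ. Then for every curve P : [0,1] → R with d_F(P,X) ≤ δ it holds that d_F(P,Q) ≤ δ. -/

import Mathlib

/-- Continuous Fréchet distance between curves on the unit interval. -/
noncomputable def frechetDist {E : Type*} [PseudoMetricSpace E] (P Q : unitInterval → E) : ℝ :=
  sInf {r : ℝ | ∃ f g : unitInterval → unitInterval,
    Continuous f ∧ Monotone f ∧ Function.Surjective f ∧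
    Continuous g ∧ Monotone g ∧ Function.Surjective g ∧
    ∀ t, dist (P (f t)) (Q (g t)) ≤ r}

/-- The directed line segment from `a` to `b`, parametrized linearly. -/
noncomputable def segCurve {E : Type*} [AddCommGroup E] [Module ℝ E] (a b : E) :
    unitInterval → E :=
  fun t => (1 - (t : ℝ)) • a + (t : ℝ) • b

/-- The polygonal curve with `n+1` vertices `p 0, …, p n`, parametrized uniformly. -/
noncomputable def polyCurve {E : Type*} [AddCommGroup E] [Module ℝ E]
    (n : ℕ) (p : Fin (n + 1) → E) (t : unitInterval) : E :=
  let x : ℝ := (t : ℝ) * n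
  let i : ℕ := min (Nat.floor x) (n - 1)
  (1 - (x - (i : ℝ))) • p ⟨min i n, Nat.lt_succ_of_le (min_le_right i n)⟩ +
    (x - (i : ℝ)) • p ⟨min (i + 1) n, Nat.lt_succ_of_le (min_le_right (i + 1) n)⟩

/-- The subcurve `Q[a,b]`, linearly reparametrized over the unit interval. -/
noncomputable def subcurve {E : Type*} (Q : unitInterval → E) (a b : unitInterval) :
    unitInterval → E :=
  fun s => Q ⟨(1 - (s : ℝ)) * (a : ℝ) + (s : ℝ) * (b : ℝ), Set.mem_Icc.mpr ⟨by
      have hs0 := unitInterval.nonneg s; have hs1 := unitInterval.le_one s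
      have ha0 := unitInterval.nonneg a; have hb0 := unitInterval.nonneg b
      have h1 : (0:ℝ) ≤ (1 - (s:ℝ)) * (a:ℝ) := mul_nonneg (by linarith) ha0
      have h2 : (0:ℝ) ≤ (s:ℝ) * (b:ℝ) := mul_nonneg hs0 hb0
      linarith, by
      have hs0 := unitInterval.nonneg s; have hs1 := unitInterval.le_one s
      have ha1 := unitInterval.le_one a; have hb1 := unitInterval.le_one b
      have h1 : (1 - (s:ℝ)) * (a:ℝ) ≤ (1 - (s:ℝ)) * 1 :=
        mul_le_mul_of_nonneg_left ha1 (by linarith)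
      have h2 : (s:ℝ) * (b:ℝ) ≤ (s:ℝ) * 1 := mul_le_mul_of_nonneg_left hb1 hs0
      linarith⟩⟩

/-- The parameter (in the uniform parametrization) of the `i`-th vertex of a
polygonal curve with `n` edges. -/
noncomputable def vparam (n : ℕ) (i : Fin (n + 1)) : unitInterval :=
  ⟨((i : ℕ) : ℝ) / (n : ℝ), Set.mem_Icc.mpr ⟨by positivity, by
    have h1 : ((i : ℕ) : ℝ) ≤ (n : ℝ) := by exact_mod_cast Nat.lt_succ_iff.mp i.isLt
    rcases Nat.eq_zero_or_pos n with h | h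
    · subst h; simp
    · rw [div_le_one (by exact_mod_cast h)]; exact h1⟩⟩

/-- `P` is `c`-monotone increasing. -/
def ApproxInc (c : ℝ) (P : unitInterval → ℝ) : Prop :=
  ∀ s t : unitInterval, s ≤ t → P s - c ≤ P t

/-- `P` is `c`-monotone decreasing. -/
def ApproxDec (c : ℝ) (P : unitInterval → ℝ) : Prop :=
  ∀ s t : unitInterval, s ≤ t → P t ≤ P s + c

/-- `P` is `c`-monotone. -/
def ApproxMono (c : ℝ) (P : unitInterval → ℝ) : Prop :=
  ApproxInc c P ∨ ApproxDec c P

/-- Concatenation of two curves (first on `[0,1/2]`, second on `[1/2,1]`). -/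
noncomputable def concatC {E : Type*} (P Q : unitInterval → E) : unitInterval → E :=
  fun t =>
    if h : (t : ℝ) ≤ 1 / 2 then
      P ⟨2 * (t : ℝ), Set.mem_Icc.mpr ⟨by have := unitInterval.nonneg t; linarith,
        by linarith⟩⟩
    else
      Q ⟨2 * (t : ℝ) - 1, Set.mem_Icc.mpr ⟨by push_neg at h; linarith,
        by have := unitInterval.le_one t; linarith⟩⟩

/-- The data of a `δ`-straightening of the curve `Q`: parameters
`0 = t 0 < … < t (Fin.last ℓ) = 1` such that each shortcut segment is within
Fréchet distance `δ` of the corresponding subcurve (locality), and each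
corresponding subcurve stays in the closed interval spanned by the shortcut's
endpoints (edge-range-preserving). -/
def StraighteningData (δ : ℝ) (Q : unitInterval → ℝ) (ℓ : ℕ)
    (t : Fin (ℓ + 1) → unitInterval) : Prop :=
  StrictMono t ∧ t 0 = 0 ∧ t (Fin.last ℓ) = 1 ∧
    ∀ i : Fin ℓ,
      frechetDist (segCurve (Q (t i.castSucc)) (Q (t i.succ)))
          (subcurve Q (t i.castSucc) (t i.succ)) ≤ δ ∧
      ∀ s : unitInterval, t i.castSucc ≤ s → s ≤ t i.succ →
        Q s ∈ Set.uIcc (Q (t i.castSucc)) (Q (t i.succ))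

/-- `Q'` is a `δ`-straightening of `Q`. -/
def IsStraightening (δ : ℝ) (Q Q' : unitInterval → ℝ) : Prop :=
  ∃ (ℓ : ℕ) (t : Fin (ℓ + 1) → unitInterval),
    StraighteningData δ Q ℓ t ∧ Q' = polyCurve ℓ (fun i => Q (t i))

/-- The data of a `δ`-signature of the curve `Q`: parameters
`0 = t 0 < … < t (Fin.last ℓ) = 1` with the locality property, non-degenerate
vertex-range-preserving interior vertices, and the `δ`-edge-length property. -/
def SignatureData (δ : ℝ) (Q : unitInterval → ℝ) (ℓ : ℕ)
    (t : Fin (ℓ + 1) → unitInterval) : Prop :=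
  StrictMono t ∧ t 0 = 0 ∧ t (Fin.last ℓ) = 1 ∧
    (∀ i : Fin ℓ,
      frechetDist (segCurve (Q (t i.castSucc)) (Q (t i.succ)))
          (subcurve Q (t i.castSucc) (t i.succ)) ≤ δ) ∧
    (∀ i : ℕ, ∀ _h1 : 0 < i, ∀ _h2 : i < ℓ,
      (Q (t ⟨i - 1, by omega⟩) < Q (t ⟨i, by omega⟩) ∧
        Q (t ⟨i + 1, by omega⟩) < Q (t ⟨i, by omega⟩) ∧
        ∀ s : unitInterval, t ⟨i - 1, by omega⟩ ≤ s → s ≤ t ⟨i + 1, by omega⟩ →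
          Q s ≤ Q (t ⟨i, by omega⟩)) ∨
      (Q (t ⟨i, by omega⟩) < Q (t ⟨i - 1, by omega⟩) ∧
        Q (t ⟨i, by omega⟩) < Q (t ⟨i + 1, by omega⟩) ∧
        ∀ s : unitInterval, t ⟨i - 1, by omega⟩ ≤ s → s ≤ t ⟨i + 1, by omega⟩ →
          Q (t ⟨i, by omega⟩) ≤ Q s)) ∧
    (∀ _h : 1 ≤ ℓ,
      δ < |Q (t ⟨1, by omega⟩) - Q (t 0)| ∧
      δ < |Q (t (Fin.last ℓ)) - Q (t ⟨ℓ - 1, by omega⟩)|) ∧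
    (∀ j : ℕ, ∀ _hj1 : 1 ≤ j, ∀ _hj2 : j + 2 ≤ ℓ,
      2 * δ < |Q (t ⟨j + 1, by omega⟩) - Q (t ⟨j, by omega⟩)|)

/-- `Q'` is a `δ`-signature of `Q`. -/
def IsSignature (δ : ℝ) (Q Q' : unitInterval → ℝ) : Prop :=
  ∃ (ℓ : ℕ) (t : Fin (ℓ + 1) → unitInterval),
    SignatureData δ Q ℓ t ∧ Q' = polyCurve ℓ (fun i => Q (t i))

/-- Vertex `j` of the polygonal curve on `q` `δ`-visits vertex `a` of the
polygonal curve on `p` under the monotone traversal `(f, g)`: they are within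
distance `δ`, and the traversal matches one of them to the other vertex or to the
interior of an edge incident to it. -/
def Visits (δ : ℝ) (m k : ℕ) (p : Fin (m + 1) → ℝ) (q : Fin (k + 1) → ℝ)
    (f g : unitInterval → unitInterval) (j : Fin (k + 1)) (a : Fin (m + 1)) : Prop :=
  |q j - p a| ≤ δ ∧
    ((∃ t : unitInterval, g t = vparam k j ∧ |(f t : ℝ) * (m : ℝ) - ((a : ℕ) : ℝ)| < 1) ∨
     (∃ t : unitInterval, f t = vparam m a ∧ |(g t : ℝ) * (k : ℝ) - ((j : ℕ) : ℝ)| < 1))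

open Set Filter

private lemma fdp_two_eps {c d : ℝ} (h : ∀ ε : ℝ, 0 < ε → c ≤ d + 2 * ε) : c ≤ d :=
  le_of_forall_pos_le_add fun ε hε => by have := h (ε/2) (by linarith); linarith

private lemma fdp_abs_le_of_between {x u w c v : ℝ} (h1 : |x - u| ≤ v) (h2 : |x - w| ≤ v)
    (hc1 : min u w ≤ c) (hc2 : c ≤ max u w) : |x - c| ≤ v := by
  rw [abs_le] at h1 h2 ⊢
  rcases le_total u w with h | h
  · rw [min_eq_left h] at hc1; rw [max_eq_right h] at hc2
    constructor <;> linarith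
  · rw [min_eq_right h] at hc1; rw [max_eq_left h] at hc2
    constructor <;> linarith

private lemma fdp_min_le_min_add {x y c e : ℝ} (hc : 0 ≤ c) (h : x ≤ y + c) :
    min x e ≤ min y e + c := by
  rcases le_total y e with h1 | h1
  · rw [min_eq_left h1]; exact le_trans (min_le_left _ _) h
  · rw [min_eq_right h1]; exact le_trans (min_le_right _ _) (by linarith)

private lemma fdp_max_le_max_add {x y c e : ℝ} (hc : 0 ≤ c) (h : x ≤ y + c) :
    max e x ≤ max e y + c := by
  rcases le_total e y with h1 | h1
  · rw [max_eq_right h1]; exact max_le (by linarith) h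
  · rw [max_eq_left h1]; exact max_le (by linarith) (by linarith)

private lemma fdp_clamp_lip (lo hi x y : ℝ) :
    |max lo (min x hi) - max lo (min y hi)| ≤ |x - y| := by
  have hxy : x ≤ y + |x - y| := by have := le_abs_self (x - y); linarith
  have hyx : y ≤ x + |x - y| := by have := neg_abs_le (x - y); linarith
  have h1 := fdp_max_le_max_add (e := lo) (abs_nonneg (x-y))
    (fdp_min_le_min_add (e := hi) (abs_nonneg (x-y)) hxy)
  have h2 := fdp_max_le_max_add (e := lo) (abs_nonneg (x-y))
    (fdp_min_le_min_add (e := hi) (abs_nonneg (x-y)) hyx)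
  rw [abs_le]; constructor <;> linarith

private lemma fdp_runSup_oneside {P : ℝ → ℝ} (hPc : Continuous P) {pi s t d' ε : ℝ}
    (hd : ∀ q q' : ℝ, 0 ≤ q → q ≤ 1 → 0 ≤ q' → q' ≤ 1 → |q - q'| < d' → |P q - P q'| < ε)
    (hε : 0 < ε)
    (hpi0 : 0 ≤ pi) (hs : pi ≤ s) (ht1 : s ≤ t) (ht2 : t ≤ 1) (hts : t - s < d') :
    sSup (P '' Icc pi t) ≤ sSup (P '' Icc pi s) + ε := by
  have hbdd : ∀ e : ℝ, BddAbove (P '' Icc pi e) := fun e => (isCompact_Icc.image hPc).bddAbove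
  refine csSup_le ⟨P pi, ⟨pi, ⟨le_rfl, hs.trans ht1⟩, rfl⟩⟩ ?_
  rintro x ⟨q, ⟨hq1, hq2⟩, rfl⟩
  rcases le_total q s with h | h
  · exact le_trans (le_csSup (hbdd s) ⟨q, ⟨hq1, h⟩, rfl⟩) (by linarith)
  · have h1 : |q - s| < d' := by rw [abs_of_nonneg (by linarith)]; linarith
    have h2 := hd q s (by linarith) (by linarith) (by linarith) (by linarith) h1
    have h3 : P s ≤ sSup (P '' Icc pi s) := le_csSup (hbdd s) ⟨s, ⟨hs, le_rfl⟩, rfl⟩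
    have h4 := (abs_lt.mp h2).2
    linarith

private lemma fdp_segCurve_apply (a b : ℝ) (t : unitInterval) :
    segCurve a b t = (1 - (t:ℝ)) * a + (t:ℝ) * b := by
  simp [segCurve, smul_eq_mul]

private lemma fdp_segCurve_zero (a b : ℝ) : segCurve a b 0 = a := by
  rw [fdp_segCurve_apply]; norm_num

private lemma fdp_segCurve_one (a b : ℝ) : segCurve a b 1 = b := by
  rw [fdp_segCurve_apply]; norm_num

private lemma fdp_segCurve_mem {a b : ℝ} (hab : a ≤ b) (t : unitInterval) :
    a ≤ segCurve a b t ∧ segCurve a b t ≤ b := by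
  rw [fdp_segCurve_apply]
  have h1 := t.2.1; have h2 := t.2.2
  constructor <;> nlinarith

private lemma fdp_segCurve_mono {a b : ℝ} (hab : a ≤ b) {s t : unitInterval} (hst : s ≤ t) :
    segCurve a b s ≤ segCurve a b t := by
  rw [fdp_segCurve_apply, fdp_segCurve_apply]
  have h : (s:ℝ) ≤ (t:ℝ) := hst
  nlinarith

private lemma fdp_segCurve_cont (a b : ℝ) : Continuous (segCurve a b : unitInterval → ℝ) := by
  have h1 : Continuous fun t : unitInterval => (1 - (t:ℝ)) * a + (t:ℝ) * b :=
    ((continuous_const.sub continuous_subtype_val).mul continuous_const).add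
      (continuous_subtype_val.mul continuous_const)
  exact h1.congr fun t => (fdp_segCurve_apply a b t).symm

private lemma fdp_msc_zero {f : unitInterval → unitInterval} (hm : Monotone f)
    (hs : Function.Surjective f) : f 0 = 0 := by
  obtain ⟨u, hu⟩ := hs 0
  have h1 : f 0 ≤ f u := hm unitInterval.nonneg'
  rw [hu] at h1
  exact le_antisymm h1 unitInterval.nonneg'

private lemma fdp_msc_one {f : unitInterval → unitInterval} (hm : Monotone f)
    (hs : Function.Surjective f) : f 1 = 1 := by
  obtain ⟨u, hu⟩ := hs 1
  have h1 : f u ≤ f 1 := hm unitInterval.le_one'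
  rw [hu] at h1
  exact le_antisymm unitInterval.le_one' h1

private lemma fdp_projIcc_zero : projIcc (0:ℝ) 1 zero_le_one 0 = (0 : unitInterval) := by
  apply Subtype.ext
  rw [Set.coe_projIcc]
  show max (0:ℝ) (min 1 0) = 0
  norm_num

private lemma fdp_projIcc_one : projIcc (0:ℝ) 1 zero_le_one 1 = (1 : unitInterval) := by
  apply Subtype.ext
  rw [Set.coe_projIcc]
  show max (0:ℝ) (min 1 1) = 1
  norm_num

private lemma fdp_fd_le_forall (P Q : unitInterval → ℝ) (δ : ℝ)
    (h : ∀ η : ℝ, 0 < η → ∃ f g : unitInterval → unitInterval,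
      Continuous f ∧ Monotone f ∧ Function.Surjective f ∧
      Continuous g ∧ Monotone g ∧ Function.Surjective g ∧
      ∀ t, dist (P (f t)) (Q (g t)) ≤ δ + η) : frechetDist P Q ≤ δ := by
  unfold frechetDist
  have hbdd : BddBelow {r : ℝ | ∃ f g : unitInterval → unitInterval,
      Continuous f ∧ Monotone f ∧ Function.Surjective f ∧
      Continuous g ∧ Monotone g ∧ Function.Surjective g ∧
      ∀ t, dist (P (f t)) (Q (g t)) ≤ r} := by
    refine ⟨0, fun r hr => ?_⟩
    obtain ⟨f, g, -, -, -, -, -, -, hw⟩ := hr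
    exact le_trans dist_nonneg (hw 0)
  refine le_of_forall_pos_le_add fun η hη => ?_
  obtain ⟨f, g, h1, h2, h3, h4, h5, h6, h7⟩ := h η hη
  exact csInf_le_of_le hbdd ⟨f, g, h1, h2, h3, h4, h5, h6, h7⟩ le_rfl

private lemma fdp_exists_fd_witness {P X : unitInterval → ℝ} (hP : Continuous P)
    (hX : Continuous X) {δ ε : ℝ} (h : frechetDist P X ≤ δ) (hε : 0 < ε) :
    ∃ f g : unitInterval → unitInterval,
      Continuous f ∧ Monotone f ∧ Function.Surjective f ∧
      Continuous g ∧ Monotone g ∧ Function.Surjective g ∧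
      ∀ t, dist (P (f t)) (X (g t)) ≤ δ + ε := by
  unfold frechetDist at h
  have hcont : Continuous fun z : unitInterval × unitInterval => dist (P z.1) (X z.2) :=
    (hP.comp continuous_fst).dist (hX.comp continuous_snd)
  obtain ⟨C, hC⟩ : ∃ C : ℝ, ∀ z : unitInterval × unitInterval, dist (P z.1) (X z.2) ≤ C := by
    obtain ⟨C, hC⟩ := (isCompact_range hcont).bddAbove
    exact ⟨C, fun z => hC ⟨z, rfl⟩⟩
  have hne : Set.Nonempty {r : ℝ | ∃ f g : unitInterval → unitInterval,
      Continuous f ∧ Monotone f ∧ Function.Surjective f ∧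
      Continuous g ∧ Monotone g ∧ Function.Surjective g ∧
      ∀ t, dist (P (f t)) (X (g t)) ≤ r} :=
    ⟨C, id, id, continuous_id, monotone_id, Function.surjective_id,
      continuous_id, monotone_id, Function.surjective_id, fun t => hC (t, t)⟩
  obtain ⟨r, hrmem, hrlt⟩ := exists_lt_of_csInf_lt hne (lt_of_le_of_lt h (lt_add_of_pos_right δ hε))
  obtain ⟨f, g, h1, h2, h3, h4, h5, h6, h7⟩ := hrmem
  exact ⟨f, g, h1, h2, h3, h4, h5, h6, fun t => (h7 t).trans hrlt.le⟩

private lemma fdp_seg_facts {R : unitInterval → ℝ} (hRc : Continuous R) {a b δ : ℝ}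
    (hab : a ≤ b) (h : frechetDist R (segCurve a b) ≤ δ) :
    |R 0 - a| ≤ δ ∧ |R 1 - b| ≤ δ ∧ (∀ t, a - δ ≤ R t ∧ R t ≤ b + δ) ∧
      (∀ s t : unitInterval, s ≤ t → R s ≤ R t + 2 * δ) := by
  have base : ∀ ε : ℝ, 0 < ε →
      (|R 0 - a| ≤ δ + ε ∧ |R 1 - b| ≤ δ + ε ∧
        (∀ t, a - (δ + ε) ≤ R t ∧ R t ≤ b + (δ + ε)) ∧
        (∀ s t : unitInterval, s ≤ t → R s ≤ R t + 2 * (δ + ε))) := by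
    intro ε hε
    obtain ⟨f, g, hfc, hfm, hfs, hgc, hgm, hgs, hw⟩ :=
      fdp_exists_fd_witness hRc (fdp_segCurve_cont a b) h hε
    have hf0 := fdp_msc_zero hfm hfs
    have hg0 := fdp_msc_zero hgm hgs
    have hf1 := fdp_msc_one hfm hfs
    have hg1 := fdp_msc_one hgm hgs
    refine ⟨?_, ?_, ?_, ?_⟩
    · have := hw 0
      rw [hf0, hg0, fdp_segCurve_zero, Real.dist_eq] at this
      exact this
    · have := hw 1
      rw [hf1, hg1, fdp_segCurve_one, Real.dist_eq] at this
      exact this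
    · intro t
      obtain ⟨u, hu⟩ := hfs t
      have hd := hw u
      rw [hu, Real.dist_eq, abs_le] at hd
      have hm := fdp_segCurve_mem hab (g u)
      constructor
      · linarith [hd.1, hd.2, hm.1, hm.2]
      · linarith [hd.1, hd.2, hm.1, hm.2]
    · intro s t hst
      obtain ⟨ut, hut⟩ := hfs t
      have hfrc : Continuous fun r : ℝ => ((f (projIcc 0 1 zero_le_one r) : ℝ)) :=
        continuous_subtype_val.comp (hfc.comp continuous_projIcc)
      have hfr0 : ((f (projIcc 0 1 zero_le_one 0) : ℝ)) = 0 := by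
        rw [fdp_projIcc_zero, hf0]; rfl
      have hfrt : ((f (projIcc 0 1 zero_le_one (ut:ℝ)) : ℝ)) = (t : ℝ) := by
        rw [projIcc_of_mem zero_le_one ut.2]
        rw [show (⟨(ut:ℝ), ut.2⟩ : unitInterval) = ut from rfl, hut]
      have hsmem : (s:ℝ) ∈ Icc ((f (projIcc 0 1 zero_le_one 0) : ℝ))
          ((f (projIcc 0 1 zero_le_one (ut:ℝ)) : ℝ)) := by
        rw [hfr0, hfrt]; exact ⟨s.2.1, hst⟩
      obtain ⟨u, humem, hu⟩ := intermediate_value_Icc ut.2.1 hfrc.continuousOn hsmem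
      have humem' : u ∈ Icc (0:ℝ) 1 := ⟨humem.1, humem.2.trans ut.2.2⟩
      have hfu : f ⟨u, humem'⟩ = s := by
        apply Subtype.ext
        rw [← hu]
        show ((f ⟨u, humem'⟩ : ℝ)) = ((f (projIcc 0 1 zero_le_one u) : ℝ))
        rw [projIcc_of_mem zero_le_one humem']
      have hle : (⟨u, humem'⟩ : unitInterval) ≤ ut := Subtype.mk_le_mk.mpr humem.2
      have w1 := hw ⟨u, humem'⟩
      have w2 := hw ut
      rw [hfu, Real.dist_eq, abs_le] at w1
      rw [hut, Real.dist_eq, abs_le] at w2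
      have hseg := fdp_segCurve_mono hab (hgm hle)
      linarith [w1.2, w2.1]
  refine ⟨?_, ?_, ?_, ?_⟩
  · exact le_of_forall_pos_le_add fun ε hε => (base ε hε).1
  · exact le_of_forall_pos_le_add fun ε hε => (base ε hε).2.1
  · intro t
    constructor
    · have h1 : a - R t ≤ δ := le_of_forall_pos_le_add fun ε hε => by
        linarith [((base ε hε).2.2.1 t).1]
      linarith
    · exact le_of_forall_pos_le_add fun ε hε => by linarith [((base ε hε).2.2.1 t).2]
  · intro s t hst
    have h1 : R s - R t ≤ 2 * δ := fdp_two_eps fun ε hε => by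
      linarith [(base ε hε).2.2.2 s t hst]
    linarith

private lemma fdp_fd_neg (P Q : unitInterval → ℝ) :
    frechetDist (fun t => -(P t)) (fun t => -(Q t)) = frechetDist P Q := by
  unfold frechetDist
  congr 1
  ext r
  constructor
  · rintro ⟨f, g, h1, h2, h3, h4, h5, h6, h7⟩
    refine ⟨f, g, h1, h2, h3, h4, h5, h6, fun t => ?_⟩
    have := h7 t
    rwa [dist_neg_neg] at this
  · rintro ⟨f, g, h1, h2, h3, h4, h5, h6, h7⟩
    refine ⟨f, g, h1, h2, h3, h4, h5, h6, fun t => ?_⟩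
    rw [dist_neg_neg]
    exact h7 t

private lemma fdp_surj_of_cont_mono {f : unitInterval → unitInterval} (hc : Continuous f)
    (h0 : f 0 = 0) (h1 : f 1 = 1) : Function.Surjective f := by
  intro y
  have hfrc : Continuous fun r : ℝ => ((f (projIcc 0 1 zero_le_one r) : ℝ)) :=
    continuous_subtype_val.comp (hc.comp continuous_projIcc)
  have hy : (y:ℝ) ∈ Icc ((f (projIcc 0 1 zero_le_one 0) : ℝ))
      ((f (projIcc 0 1 zero_le_one 1) : ℝ)) := by
    rw [fdp_projIcc_zero, fdp_projIcc_one, h0, h1]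
    exact y.2
  obtain ⟨u, humem, hu⟩ := intermediate_value_Icc zero_le_one hfrc.continuousOn hy
  refine ⟨⟨u, humem⟩, ?_⟩
  apply Subtype.ext
  rw [← hu]
  show ((f ⟨u, humem⟩ : ℝ)) = ((f (projIcc 0 1 zero_le_one u) : ℝ))
  rw [projIcc_of_mem zero_le_one humem]

open scoped Classical in
private noncomputable def fdp_pf (P : ℝ → ℝ) (w : ℕ → ℝ) (v : ℝ) : ℕ → ℝ :=
  fun i => Nat.rec (motive := fun _ => ℝ) 0 (fun i pi =>
    if (w i < w (i+1)) ∧ (Icc pi 1 ∩ {p | P p ≤ w (i+1) - v}).Nonempty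
    then sSup (Icc pi 1 ∩ {p | P p ≤ w (i+1) - v}) else pi) i

private lemma fdp_pf_zero (P : ℝ → ℝ) (w : ℕ → ℝ) (v : ℝ) : fdp_pf P w v 0 = 0 := rfl

open scoped Classical in
private lemma fdp_pf_succ (P : ℝ → ℝ) (w : ℕ → ℝ) (v : ℝ) (i : ℕ) :
    fdp_pf P w v (i+1) =
      if (w i < w (i+1)) ∧ (Icc (fdp_pf P w v i) 1 ∩ {p | P p ≤ w (i+1) - v}).Nonempty
      then sSup (Icc (fdp_pf P w v i) 1 ∩ {p | P p ≤ w (i+1) - v}) else fdp_pf P w v i := rfl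

set_option maxHeartbeats 1600000 in
private lemma fdp_piece_rise (P : ℝ → ℝ) (hPc : Continuous P)
    (hUC : ∀ ε : ℝ, 0 < ε → ∃ d : ℝ, 0 < d ∧ ∀ q q' : ℝ, 0 ≤ q → q ≤ 1 → 0 ≤ q' → q' ≤ 1 →
      |q - q'| < d → |P q - P q'| < ε)
    (δ v κ C θ : ℝ) (hδ0 : 0 < δ) (hvδ : δ < v) (hκ0 : 0 < κ)
    (u u' : ℝ) (hrise : u < u') (pi ps : ℝ) (hpi0 : 0 ≤ pi) (hlt : pi < ps) (hps1 : ps ≤ 1)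
    (τi Nr : ℝ) (hNr : 0 < Nr)
    (a b : ℝ) (hCge : b - a + δ ≤ C) (hab : a < b) (hua : a ≤ u) (hub : u' ≤ b)
    (hθ0 : 0 < θ) (hθ1 : θ ≤ 1/2) (hθC : θ * C ≤ κ)
    (hPps : P ps = u' - v)
    (hI1 : |P pi - u| ≤ v)
    (hI3 : ∀ p, pi ≤ p → p ≤ 1 → u - v ≤ P p)
    (hP2 : ∀ s t : ℝ, 0 ≤ s → s ≤ t → t ≤ 1 → P s ≤ P t + 2 * δ)
    (hPr : ∀ t : ℝ, 0 ≤ t → t ≤ 1 → a - δ ≤ P t ∧ P t ≤ b + δ) :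
    ∃ G : ℝ → ℝ, Continuous G ∧ Monotone G ∧ (∀ t, t ≤ τi → G t = pi) ∧
      (∀ t, τi + 1/Nr ≤ t → G t = ps) ∧ (∀ t, pi ≤ G t ∧ G t ≤ ps) ∧
      (∀ t, τi ≤ t → t ≤ τi + 1/Nr →
        |P (G t) - (u + (t - τi) * Nr * (u' - u))| ≤ v + κ) := by
  have hv0 : 0 < v := by linarith
  have hΔ : 0 < u' - u := by linarith
  have hpspi : 0 < ps - pi := by linarith
  have hh0 : (0:ℝ) < 1/Nr := by positivity
  have hCpos : 0 < C := by linarith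
  -- running max
  set Mc : ℝ → ℝ := fun p => sSup (P '' Icc pi (max pi (min p ps))) with hMcdef
  have hbddA : ∀ e : ℝ, BddAbove (P '' Icc pi e) := fun e => (isCompact_Icc.image hPc).bddAbove
  have hMcge : ∀ r q : ℝ, pi ≤ q → q ≤ max pi (min r ps) → P q ≤ Mc r := by
    intro r q h1 h2
    simp only [hMcdef]
    exact le_csSup (hbddA _) ⟨q, ⟨h1, h2⟩, rfl⟩
  have hMcle : ∀ r B : ℝ, (∀ q, pi ≤ q → q ≤ max pi (min r ps) → P q ≤ B) → Mc r ≤ B := by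
    intro r B h
    simp only [hMcdef]
    refine csSup_le ⟨P pi, ⟨pi, ⟨le_rfl, le_max_left _ _⟩, rfl⟩⟩ ?_
    rintro x ⟨q, ⟨h1, h2⟩, rfl⟩
    exact h q h1 h2
  have hMsmono : ∀ x1 x2 : ℝ, pi ≤ x1 → x1 ≤ x2 →
      sSup (P '' Icc pi x1) ≤ sSup (P '' Icc pi x2) := by
    intro x1 x2 h1 h2
    refine csSup_le_csSup (hbddA _) ⟨P pi, ⟨pi, ⟨le_rfl, h1⟩, rfl⟩⟩ ?_
    exact image_mono (Icc_subset_Icc le_rfl h2)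
  have hMcmono : Monotone Mc := by
    intro r1 r2 h12
    simp only [hMcdef]
    exact hMsmono _ _ (le_max_left _ _) (max_le_max le_rfl (min_le_min h12 le_rfl))
  have hMccont : Continuous Mc := by
    rw [Metric.continuous_iff]
    intro r₀ ε hε
    obtain ⟨d', hd'0, hd'⟩ := hUC (ε/2) (by linarith)
    refine ⟨d', hd'0, fun r hr => ?_⟩
    have hdist : |max pi (min r ps) - max pi (min r₀ ps)| < d' :=
      lt_of_le_of_lt (fdp_clamp_lip pi ps r r₀) (by rwa [Real.dist_eq] at hr)
    have hm1 : pi ≤ max pi (min r ps) := le_max_left _ _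
    have hm2 : pi ≤ max pi (min r₀ ps) := le_max_left _ _
    have hm1' : max pi (min r ps) ≤ ps := max_le hlt.le (min_le_right _ _)
    have hm2' : max pi (min r₀ ps) ≤ ps := max_le hlt.le (min_le_right _ _)
    have key : ∀ y1 y2 : ℝ, pi ≤ y1 → y1 ≤ y2 → y2 ≤ ps → y2 - y1 < d' →
        sSup (P '' Icc pi y2) ≤ sSup (P '' Icc pi y1) + ε/2 := by
      intro y1 y2 e1 e2 e3 e4
      exact fdp_runSup_oneside hPc hd' (by linarith) hpi0 e1 e2 (e3.trans hps1) e4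
    have habs : |sSup (P '' Icc pi (max pi (min r ps))) -
        sSup (P '' Icc pi (max pi (min r₀ ps)))| ≤ ε/2 := by
      rcases le_total (max pi (min r ps)) (max pi (min r₀ ps)) with hcc | hcc
      · have h1 := hMsmono _ _ hm1 hcc
        have h2 := key _ _ hm1 hcc hm2' (by have := (abs_lt.mp hdist).1; linarith)
        rw [abs_le]; constructor <;> linarith
      · have h1 := hMsmono _ _ hm2 hcc
        have h2 := key _ _ hm2 hcc hm1' (by have := (abs_lt.mp hdist).2; linarith)
        rw [abs_le]; constructor <;> linarith
    rw [Real.dist_eq]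
    simp only [hMcdef]
    calc |sSup (P '' Icc pi (max pi (min r ps))) -
        sSup (P '' Icc pi (max pi (min r₀ ps)))| ≤ ε/2 := habs
      _ < ε := by linarith
  -- the level function
  set x : ℝ → ℝ := fun p => max u (min u' (Mc p - v)) with hxdef
  have hxmono : Monotone x := by
    intro p q h
    simp only [hxdef]
    exact max_le_max le_rfl (min_le_min le_rfl (by have := hMcmono h; linarith))
  have hxcont : Continuous x := by
    simp only [hxdef]
    exact continuous_const.max (continuous_const.min (hMccont.sub continuous_const))
  have hxrange : ∀ p, u ≤ x p ∧ x p ≤ u' := by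
    intro p
    simp only [hxdef]
    exact ⟨le_max_left _ _, max_le hrise.le (min_le_left _ _)⟩
  have hclampid : ∀ p, pi ≤ p → p ≤ ps → max pi (min p ps) = p := by
    intro p h1 h2
    rw [min_eq_left h2, max_eq_right h1]
  have hpw_up : ∀ p, pi ≤ p → p ≤ ps → P p ≤ x p + v := by
    intro p h1 h2
    have hPMc : P p ≤ Mc p := hMcge p p h1 (le_of_eq (hclampid p h1 h2).symm)
    have hxu : u ≤ x p := (hxrange p).1
    have hP2' : P p ≤ u' + v := by
      have h3 := hP2 p ps (le_trans hpi0 h1) h2 hps1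
      rw [hPps] at h3
      linarith
    rcases le_total (Mc p - v) u with hcc | hcc
    · linarith
    · rcases le_total u' (Mc p - v) with hdd | hdd
      · have hxp : x p = u' := by
          simp only [hxdef]
          rw [min_eq_left hdd, max_eq_right hrise.le]
        rw [hxp]; exact hP2'
      · have hxp : x p = Mc p - v := by
          simp only [hxdef]
          rw [min_eq_right hdd, max_eq_right hcc]
        rw [hxp]; linarith
  have hpw_lo : ∀ p, pi ≤ p → p ≤ ps → x p - v ≤ P p := by
    intro p h1 h2
    have hMb : Mc p ≤ P p + 2*δ := by
      apply hMcle
      intro q hq1 hq2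
      rw [hclampid p h1 h2] at hq2
      exact hP2 q p (le_trans hpi0 hq1) hq2 (h2.trans hps1)
    have hI3p : u - v ≤ P p := hI3 p h1 (h2.trans hps1)
    have h4 : x p ≤ max u (Mc p - v) := by
      simp only [hxdef]
      exact max_le_max le_rfl (min_le_right _ _)
    have h5 : max u (Mc p - v) ≤ P p + v := max_le (by linarith) (by linarith)
    linarith
  have hpw : ∀ p, pi ≤ p → p ≤ ps → |P p - x p| ≤ v := by
    intro p h1 h2
    rw [abs_le]
    exact ⟨by linarith [hpw_lo p h1 h2], by linarith [hpw_up p h1 h2]⟩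
  have hMcpi : Mc pi = P pi := by
    simp only [hMcdef]
    rw [hclampid pi le_rfl hlt.le, Set.Icc_self, Set.image_singleton, csSup_singleton]
  have hxpi : x pi = u := by
    have hup : P pi - u ≤ v := by
      have := (abs_le.mp hI1).2
      linarith
    simp only [hxdef]
    rw [hMcpi]
    have h6 : min u' (P pi - v) ≤ u := le_trans (min_le_right _ _) (by linarith)
    rw [max_eq_left h6]
  have hxps_lb : u' - 2*v ≤ x ps := by
    have h7 : P ps ≤ Mc ps := hMcge ps ps hlt.le (le_of_eq (hclampid ps hlt.le le_rfl).symm)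
    have h8 : u' - v ≤ Mc ps := by rw [← hPps]; exact h7
    simp only [hxdef]
    have h9 : u' - 2*v ≤ min u' (Mc ps - v) := le_min (by linarith) (by linarith)
    exact le_trans h9 (le_max_right _ _)
  -- the time change ψ
  set ψ : ℝ → ℝ := fun p => (1-θ) * (τi + (x p - u)/(u'-u) * (1/Nr))
      + θ * (τi + (p - pi)/(ps - pi) * (1/Nr)) with hψdef
  have hψcont : Continuous ψ := by
    simp only [hψdef]
    apply Continuous.add
    · exact continuous_const.mul (continuous_const.add
        (((hxcont.sub continuous_const).div_const _).mul continuous_const))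
    · exact continuous_const.mul (continuous_const.add
        (((continuous_id.sub continuous_const).div_const _).mul continuous_const))
  have hψsm : StrictMono ψ := by
    intro p q hpq
    simp only [hψdef]
    have h1 : x p ≤ x q := hxmono hpq.le
    have e1 : (x p - u)/(u'-u) ≤ (x q - u)/(u'-u) :=
      (div_le_div_iff_of_pos_right hΔ).mpr (by linarith)
    have e2 : (p - pi)/(ps - pi) < (q - pi)/(ps - pi) :=
      (div_lt_div_iff_of_pos_right hpspi).mpr (by linarith)
    have t1 : (1-θ) * (τi + (x p - u)/(u'-u) * (1/Nr))
        ≤ (1-θ) * (τi + (x q - u)/(u'-u) * (1/Nr)) := by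
      apply mul_le_mul_of_nonneg_left _ (by linarith : (0:ℝ) ≤ 1-θ)
      have := mul_le_mul_of_nonneg_right e1 hh0.le
      linarith
    have t2 : θ * (τi + (p - pi)/(ps - pi) * (1/Nr))
        < θ * (τi + (q - pi)/(ps - pi) * (1/Nr)) := by
      apply mul_lt_mul_of_pos_left _ hθ0
      have := mul_lt_mul_of_pos_right e2 hh0
      linarith
    exact add_lt_add_of_le_of_lt t1 t2
  have hψpi : ψ pi = τi := by
    simp only [hψdef]
    rw [hxpi]
    have h1 : (u - u)/(u'-u) = 0 := by rw [sub_self, zero_div]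
    have h2 : (pi - pi)/(ps - pi) = 0 := by rw [sub_self, zero_div]
    rw [h1, h2]
    ring
  have hψge : ∀ p, pi ≤ p → τi ≤ ψ p := by
    intro p hp
    simp only [hψdef]
    have e0 : (0:ℝ) ≤ (x p - u)/(u'-u) * (1/Nr) :=
      mul_nonneg (div_nonneg (by linarith [(hxrange p).1]) hΔ.le) hh0.le
    have e1 : (0:ℝ) ≤ (p - pi)/(ps - pi) * (1/Nr) :=
      mul_nonneg (div_nonneg (by linarith) hpspi.le) hh0.le
    nlinarith [mul_nonneg (by linarith : (0:ℝ) ≤ 1-θ) e0, mul_nonneg hθ0.le e1]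
  have hψble : ∀ p, pi ≤ p → p ≤ ps → ψ p ≤ τi + 1/Nr := by
    intro p h1 h2
    simp only [hψdef]
    have e0 : (x p - u)/(u'-u) ≤ 1 := by
      rw [div_le_one hΔ]
      linarith [(hxrange p).2]
    have e0' : (x p - u)/(u'-u) * (1/Nr) ≤ 1/Nr := by
      have := mul_le_mul_of_nonneg_right e0 hh0.le
      linarith
    have e1 : (p - pi)/(ps - pi) ≤ 1 := by
      rw [div_le_one hpspi]; linarith
    have e1' : (p - pi)/(ps - pi) * (1/Nr) ≤ 1/Nr := by
      have := mul_le_mul_of_nonneg_right e1 hh0.le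
      linarith
    nlinarith [mul_le_mul_of_nonneg_left e0' (by linarith : (0:ℝ) ≤ 1-θ),
      mul_le_mul_of_nonneg_left e1' hθ0.le]
  have hψsurj : Function.Surjective ψ := by
    have hsub : Tendsto (fun p : ℝ => p - pi) atTop atTop :=
      tendsto_atTop_add_const_right atTop (-pi) tendsto_id
    have hsub' : Tendsto (fun p : ℝ => p - pi) atBot atBot :=
      tendsto_atBot_add_const_right atBot (-pi) tendsto_id
    apply Continuous.surjective hψcont
    · have hlb : Tendsto (fun p : ℝ =>
          (1-θ) * τi + θ * (τi + (p - pi)/(ps - pi) * (1/Nr))) atTop atTop := by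
        apply tendsto_atTop_add_const_left
        apply Filter.Tendsto.const_mul_atTop hθ0
        apply tendsto_atTop_add_const_left
        exact (hsub.atTop_div_const hpspi).atTop_mul_const hh0
      apply tendsto_atTop_mono _ hlb
      intro p
      simp only [hψdef]
      have e0 : (0:ℝ) ≤ (x p - u)/(u'-u) * (1/Nr) :=
        mul_nonneg (div_nonneg (by linarith [(hxrange p).1]) hΔ.le) hh0.le
      nlinarith [mul_nonneg (by linarith : (0:ℝ) ≤ 1-θ) e0]
    · have hub' : Tendsto (fun p : ℝ =>
          (1-θ) * (τi + 1/Nr) + θ * (τi + (p - pi)/(ps - pi) * (1/Nr))) atBot atBot := by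
        apply tendsto_atBot_add_const_left
        apply Filter.Tendsto.const_mul_atBot hθ0
        apply tendsto_atBot_add_const_left
        exact (hsub'.atBot_div_const hpspi).atBot_mul_const hh0
      apply tendsto_atBot_mono _ hub'
      intro p
      simp only [hψdef]
      have e0 : (x p - u)/(u'-u) ≤ 1 := by
        rw [div_le_one hΔ]
        linarith [(hxrange p).2]
      have e0' : (x p - u)/(u'-u) * (1/Nr) ≤ 1/Nr := by
        have := mul_le_mul_of_nonneg_right e0 hh0.le
        linarith
      nlinarith [mul_le_mul_of_nonneg_left e0' (by linarith : (0:ℝ) ≤ 1-θ)]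
  set iso : ℝ ≃o ℝ := StrictMono.orderIsoOfSurjective ψ hψsm hψsurj with hisodef
  have hcoe : ∀ p, iso p = ψ p := fun p => rfl
  have hsymmψ : ∀ p, iso.symm (ψ p) = p := by
    intro p
    rw [← hcoe p]
    exact iso.symm_apply_apply p
  set G : ℝ → ℝ := fun t => iso.symm (max τi (min t (ψ ps))) with hGdef
  have hGcont : Continuous G := by
    simp only [hGdef]
    exact iso.symm.continuous.comp (continuous_const.max (continuous_id.min continuous_const))
  have hGmono : Monotone G := by
    intro s t h
    simp only [hGdef]
    exact iso.symm.monotone (max_le_max le_rfl (min_le_min h le_rfl))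
  have hGψ : ∀ t, ψ (G t) = max τi (min t (ψ ps)) := by
    intro t
    simp only [hGdef]
    rw [← hcoe]
    exact iso.apply_symm_apply _
  have hGleft : ∀ t, t ≤ τi → G t = pi := by
    intro t ht
    have h1 : max τi (min t (ψ ps)) = τi :=
      max_eq_left (le_trans (min_le_left _ _) ht)
    simp only [hGdef]
    rw [h1]
    conv_lhs => rw [← hψpi]
    exact hsymmψ pi
  have hGright : ∀ t, τi + 1/Nr ≤ t → G t = ps := by
    intro t ht
    have h1 : ψ ps ≤ t := le_trans (hψble ps hlt.le le_rfl) ht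
    have h2 : max τi (min t (ψ ps)) = ψ ps := by
      rw [min_eq_right h1, max_eq_right (hψge ps hlt.le)]
    simp only [hGdef]
    rw [h2, hsymmψ]
  have hsymmτi : iso.symm τi = pi := by
    conv_lhs => rw [← hψpi]
    exact hsymmψ pi
  have hGrange : ∀ t, pi ≤ G t ∧ G t ≤ ps := by
    intro t
    simp only [hGdef]
    constructor
    · have h2 := iso.symm.monotone (le_max_left τi (min t (ψ ps)))
      rw [hsymmτi] at h2
      exact h2
    · have h2 := iso.symm.monotone
        (max_le (hψge ps hlt.le) (min_le_right t (ψ ps)))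
      rw [hsymmψ] at h2
      exact h2
  have hΔ0 : u' - u ≠ 0 := ne_of_gt hΔ
  have hps0 : ps - pi ≠ 0 := ne_of_gt hpspi
  have hNr0 : Nr ≠ 0 := ne_of_gt hNr
  have hLid : ∀ s : ℝ, u + (ψ s - τi) * Nr * (u' - u) =
      (1-θ) * x s + θ * (u + (s - pi)/(ps - pi) * (u' - u)) := by
    intro s
    simp only [hψdef]
    field_simp
    ring
  have hwidth : ∀ t, τi ≤ t → t ≤ τi + 1/Nr →
      |P (G t) - (u + (t - τi) * Nr * (u' - u))| ≤ v + κ := by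
    intro t ht1 ht2
    have hp1 : pi ≤ G t := (hGrange t).1
    have hp2 : G t ≤ ps := (hGrange t).2
    rcases le_total t (ψ ps) with hcase | hcase
    · have hc1 : max τi (min t (ψ ps)) = t := by
        rw [min_eq_left hcase, max_eq_right ht1]
      have hψp : ψ (G t) = t := by rw [hGψ t, hc1]
      have hxb := hpw (G t) hp1 hp2
      have hQb : |P (G t) - (u + (G t - pi)/(ps - pi) * (u' - u))| ≤ C := by
        have hPm := hPr (G t) (le_trans hpi0 hp1) (hp2.trans hps1)
        have hfrac1 : 0 ≤ (G t - pi)/(ps - pi) := div_nonneg (by linarith) hpspi.le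
        have hfrac2 : (G t - pi)/(ps - pi) ≤ 1 := by
          rw [div_le_one hpspi]; linarith
        have hm0 : (0:ℝ) ≤ (G t - pi)/(ps - pi) * (u' - u) :=
          mul_nonneg hfrac1 hΔ.le
        have hm1 : u ≤ u + (G t - pi)/(ps - pi) * (u' - u) := by linarith
        have hm2 : u + (G t - pi)/(ps - pi) * (u' - u) ≤ u' := by
          have hm3 : (0:ℝ) ≤ (1 - (G t - pi)/(ps - pi)) * (u' - u) :=
            mul_nonneg (by linarith) hΔ.le
          nlinarith
        rw [abs_le]
        constructor
        · linarith [hPm.1, hPm.2]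
        · linarith [hPm.1, hPm.2]
      have hsplit : P (G t) - (u + (t - τi) * Nr * (u' - u)) =
          (1-θ) * (P (G t) - x (G t)) +
          θ * (P (G t) - (u + (G t - pi)/(ps - pi) * (u' - u))) := by
        have h9 : u + (t - τi) * Nr * (u' - u) =
            (1-θ) * x (G t) + θ * (u + (G t - pi)/(ps - pi) * (u' - u)) := by
          conv_lhs => rw [← hψp]
          exact hLid (G t)
        rw [h9]
        ring
      rw [hsplit]
      have habs1 : |(1-θ) * (P (G t) - x (G t)) +
          θ * (P (G t) - (u + (G t - pi)/(ps - pi) * (u' - u)))| ≤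
          (1-θ) * |P (G t) - x (G t)| +
          θ * |P (G t) - (u + (G t - pi)/(ps - pi) * (u' - u))| := by
        calc |(1-θ) * (P (G t) - x (G t)) +
            θ * (P (G t) - (u + (G t - pi)/(ps - pi) * (u' - u)))| ≤
            |(1-θ) * (P (G t) - x (G t))| +
            |θ * (P (G t) - (u + (G t - pi)/(ps - pi) * (u' - u)))| := abs_add_le _ _
          _ = (1-θ) * |P (G t) - x (G t)| +
              θ * |P (G t) - (u + (G t - pi)/(ps - pi) * (u' - u))| := by
            rw [abs_mul, abs_mul, abs_of_nonneg (by linarith : (0:ℝ) ≤ 1-θ),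
              abs_of_nonneg hθ0.le]
      have hb1' : (1-θ) * |P (G t) - x (G t)| ≤ (1-θ) * v :=
        mul_le_mul_of_nonneg_left hxb (by linarith)
      have hb2' : θ * |P (G t) - (u + (G t - pi)/(ps - pi) * (u' - u))| ≤ θ * C :=
        mul_le_mul_of_nonneg_left hQb hθ0.le
      have hfin : (1-θ) * v ≤ v := by
        have := mul_nonneg hθ0.le hv0.le
        nlinarith
      linarith
    · have hc1 : max τi (min t (ψ ps)) = ψ ps := by
        rw [min_eq_right hcase, max_eq_right (hψge ps hlt.le)]
      have hpps : G t = ps := by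
        simp only [hGdef]
        rw [hc1, hsymmψ]
      have hLm : u + (ψ ps - τi) * Nr * (u' - u) ≤ u + (t - τi) * Nr * (u' - u) := by
        have hs1 : ψ ps - τi ≤ t - τi := by linarith
        have hs2 : (ψ ps - τi) * Nr ≤ (t - τi) * Nr := mul_le_mul_of_nonneg_right hs1 hNr.le
        have hs3 := mul_le_mul_of_nonneg_right hs2 hΔ.le
        linarith
      have hLub : u + (t - τi) * Nr * (u' - u) ≤ u' := by
        have h3 : t - τi ≤ 1/Nr := by linarith
        have h4 : (t - τi) * Nr ≤ 1 := by
          calc (t - τi) * Nr ≤ (1/Nr) * Nr := mul_le_mul_of_nonneg_right h3 hNr.le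
            _ = 1 := by field_simp
        have h5 := mul_le_mul_of_nonneg_right h4 hΔ.le
        linarith
      have hLps : u + (ψ ps - τi) * Nr * (u' - u) = (1-θ) * x ps + θ * u' := by
        rw [hLid ps]
        have h6 : (ps - pi)/(ps - pi) = 1 := div_self hps0
        rw [h6]
        ring
      have hPGt : P (G t) = u' - v := by rw [hpps]; exact hPps
      have h5 : u' - 2*v ≤ (1-θ) * x ps + θ * u' := by
        nlinarith [mul_nonneg (by linarith : (0:ℝ) ≤ 1-θ)
          (by linarith [hxps_lb] : (0:ℝ) ≤ x ps - (u' - 2*v)),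
          mul_nonneg hθ0.le hv0.le]
      rw [abs_le, hPGt]
      constructor
      · linarith [hκ0.le]
      · rw [← hLps] at h5
        linarith [hκ0.le]
  exact ⟨G, hGcont, hGmono, hGleft, hGright, hGrange, hwidth⟩

set_option maxHeartbeats 1600000 in
private lemma fdp_core (a b δ η : ℝ) (hab : a < b) (hδ : 0 < δ) (hη : 0 < η)
    (P Q : ℝ → ℝ) (hPc : Continuous P)
    (hUC : ∀ ε : ℝ, 0 < ε → ∃ d : ℝ, 0 < d ∧ ∀ q q' : ℝ, 0 ≤ q → q ≤ 1 → 0 ≤ q' → q' ≤ 1 →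
      |q - q'| < d → |P q - P q'| < ε)
    (hQeps : ∀ ε : ℝ, 0 < ε → ∃ d : ℝ, 0 < d ∧ ∀ q q' : ℝ, 0 ≤ q → q ≤ 1 → 0 ≤ q' → q' ≤ 1 →
      |q - q'| < d → |Q q - Q q'| < ε)
    (hQ0 : Q 0 = a) (hQ1 : Q 1 = b)
    (hQ2 : ∀ s t : ℝ, 0 ≤ s → s ≤ t → t ≤ 1 → Q s ≤ Q t + 2 * δ)
    (hQr : ∀ t : ℝ, 0 ≤ t → t ≤ 1 → a ≤ Q t ∧ Q t ≤ b)
    (hP0 : |P 0 - a| ≤ δ) (hP1 : b - δ ≤ P 1)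
    (hPr : ∀ t : ℝ, 0 ≤ t → t ≤ 1 → a - δ ≤ P t ∧ P t ≤ b + δ)
    (hP2 : ∀ s t : ℝ, 0 ≤ s → s ≤ t → t ≤ 1 → P s ≤ P t + 2 * δ) :
    ∃ F : ℝ → ℝ, Continuous F ∧ Monotone F ∧ F 0 = 0 ∧ (∀ t, 0 ≤ F t ∧ F t ≤ 1) ∧
      (∀ t, 0 ≤ t → t ≤ 1 → |P (F t) - Q t| ≤ δ + η) ∧
      (∀ p, F 1 ≤ p → p ≤ 1 → |P p - b| ≤ δ + η) := by
  classical
  set v : ℝ := δ + η/4 with hvdef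
  set κ : ℝ := η/8 with hκdef
  have hvδ : δ < v := by rw [hvdef]; linarith
  have hv0 : 0 < v := by linarith
  have hκ0 : 0 < κ := by rw [hκdef]; linarith
  -- mesh for Q
  obtain ⟨d, hd0, hdm⟩ := hQeps (η/8) (by linarith)
  obtain ⟨N, hN1, hNd⟩ : ∃ N : ℕ, 1 ≤ N ∧ 1/(N:ℝ) < d := by
    refine ⟨Nat.ceil (1/d) + 1, Nat.le_add_left 1 _, ?_⟩
    have h1 : (1:ℝ)/d < ((Nat.ceil (1/d) : ℕ) : ℝ) + 1 :=
      lt_of_le_of_lt (Nat.le_ceil _) (by linarith)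
    have hN0 : (0:ℝ) < ((Nat.ceil (1/d) + 1 : ℕ) : ℝ) := by positivity
    rw [div_lt_iff₀ hN0]
    have h2 : 1 = d * (1/d) := by field_simp
    calc (1:ℝ) = d * (1/d) := h2
      _ < d * (((Nat.ceil (1/d) : ℕ) : ℝ) + 1) := by
          apply mul_lt_mul_of_pos_left _ hd0
          exact h1
      _ = d * ((Nat.ceil (1/d) + 1 : ℕ) : ℝ) := by push_cast; ring
  have hNpos : (0:ℝ) < (N:ℝ) := by exact_mod_cast Nat.lt_of_lt_of_le Nat.zero_lt_one hN1
  have hh0 : (0:ℝ) < 1/(N:ℝ) := by positivity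
  set τ : ℕ → ℝ := fun i => (i:ℝ)/(N:ℝ) with hτdef
  have hτmono : ∀ i j : ℕ, i ≤ j → τ i ≤ τ j := by
    intro i j h
    have h' : (i:ℝ) ≤ (j:ℝ) := by exact_mod_cast h
    simp only [hτdef]
    exact (div_le_div_iff_of_pos_right hNpos).mpr h'
  have hτ0 : τ 0 = 0 := by simp [hτdef]
  have hτN : τ N = 1 := by
    have h1 : τ N = (N:ℝ)/(N:ℝ) := by simp only [hτdef]
    rw [h1, div_self (ne_of_gt hNpos)]
  have hτsucc : ∀ i : ℕ, τ (i+1) = τ i + 1/(N:ℝ) := by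
    intro i
    simp only [hτdef]
    push_cast
    rw [add_div]
  have hτmem : ∀ i : ℕ, i ≤ N → 0 ≤ τ i ∧ τ i ≤ 1 := fun i h =>
    ⟨by simp only [hτdef]; positivity, by rw [← hτN]; exact hτmono i N h⟩
  set w : ℕ → ℝ := fun i => Q (τ i) with hwdef
  have hw0 : w 0 = a := by simp only [hwdef]; rw [hτ0]; exact hQ0
  have hwN : w N = b := by simp only [hwdef]; rw [hτN]; exact hQ1
  have hwmem : ∀ i, i ≤ N → a ≤ w i ∧ w i ≤ b := fun i h =>
    hQr _ (hτmem i h).1 (hτmem i h).2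
  have hwF2 : ∀ i j, i ≤ j → j ≤ N → w i ≤ w j + 2*δ := fun i j hij hj =>
    hQ2 _ _ (hτmem i (hij.trans hj)).1 (hτmono i j hij) (hτmem j hj).2
  have hwmesh : ∀ i, i + 1 ≤ N → |w (i+1) - w i| ≤ η/8 := by
    intro i hi
    have hdist : |τ (i+1) - τ i| < d := by
      rw [hτsucc]
      have : τ i + 1/(N:ℝ) - τ i = 1/(N:ℝ) := by ring
      rw [this, abs_of_pos hh0]
      exact hNd
    exact (hdm (τ (i+1)) (τ i) (hτmem _ hi).1 (hτmem _ hi).2 (hτmem i (by omega)).1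
      (hτmem i (by omega)).2 hdist).le
  -- the P-side vertex positions
  set pf : ℕ → ℝ := fdp_pf P w v with hpfdef
  have hpf0 : pf 0 = 0 := fdp_pf_zero P w v
  have hpfsucc : ∀ i, pf (i+1) =
      if (w i < w (i+1)) ∧ (Icc (pf i) 1 ∩ {p | P p ≤ w (i+1) - v}).Nonempty
      then sSup (Icc (pf i) 1 ∩ {p | P p ≤ w (i+1) - v}) else pf i := fun i =>
    fdp_pf_succ P w v i
  -- facts about the sSup in the rise case
  have hSfacts : ∀ i pi, i + 1 ≤ N → 0 ≤ pi → pi ≤ 1 →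
      (Icc pi 1 ∩ {p | P p ≤ w (i+1) - v}).Nonempty →
      (pi ≤ sSup (Icc pi 1 ∩ {p | P p ≤ w (i+1) - v}) ∧
       sSup (Icc pi 1 ∩ {p | P p ≤ w (i+1) - v}) ≤ 1 ∧
       sSup (Icc pi 1 ∩ {p | P p ≤ w (i+1) - v}) < 1 ∧
       P (sSup (Icc pi 1 ∩ {p | P p ≤ w (i+1) - v})) = w (i+1) - v ∧
       (∀ p, sSup (Icc pi 1 ∩ {p | P p ≤ w (i+1) - v}) < p → p ≤ 1 → w (i+1) - v < P p)) := by
    intro i pi hiN hpi0 hpi1 hne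
    set S : Set ℝ := Icc pi 1 ∩ {p | P p ≤ w (i+1) - v} with hSdef
    have hcpt : IsCompact S := isCompact_Icc.inter_right (isClosed_le hPc continuous_const)
    have hmem := hcpt.sSup_mem hne
    obtain ⟨⟨hps1, hps2⟩, hps3⟩ := hmem
    have hup : ∀ p, sSup S < p → p ≤ 1 → w (i+1) - v < P p := by
      intro p hp hp1
      by_contra hcon
      push_neg at hcon
      have hmem2 : p ∈ S := ⟨⟨le_trans hps1 hp.le, hp1⟩, hcon⟩
      have := le_csSup hcpt.bddAbove hmem2
      linarith
    have hlt1 : sSup S < 1 := by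
      rcases lt_or_eq_of_le hps2 with h | h
      · exact h
      · exfalso
        have hb1 : w (i+1) ≤ b := (hwmem _ hiN).2
        rw [h] at hps3
        have : P 1 ≤ w (i+1) - v := hps3
        linarith
    have heq : P (sSup S) = w (i+1) - v := by
      refine le_antisymm hps3 ?_
      by_contra hcon
      push_neg at hcon
      obtain ⟨d', hd'0, hd'⟩ := Metric.continuousAt_iff.mp hPc.continuousAt
        (w (i+1) - v - P (sSup S)) (by linarith)
      have hppos : sSup S < min 1 (sSup S + d'/2) := lt_min hlt1 (by linarith)
      have hple : min 1 (sSup S + d'/2) ≤ 1 := min_le_left _ _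
      have hdist : dist (min 1 (sSup S + d'/2)) (sSup S) < d' := by
        rw [Real.dist_eq, abs_of_nonneg (by linarith)]
        have := min_le_right 1 (sSup S + d'/2)
        linarith
      have h5 := hd' hdist
      rw [Real.dist_eq] at h5
      have h6 := hup _ hppos hple
      have h7 := (abs_lt.mp h5).2
      linarith
    exact ⟨hps1, hps2, hlt1, heq, hup⟩
  -- the invariant
  have hInv : ∀ i, i ≤ N → (0 ≤ pf i ∧ pf i ≤ 1) ∧ |P (pf i) - w i| ≤ v ∧
      (∀ j, i ≤ j → j ≤ N → P (pf i) ≤ w j + v) ∧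
      (∀ p, pf i ≤ p → p ≤ 1 → w i - v ≤ P p) := by
    intro i
    induction i with
    | zero =>
      intro _
      have h0 := abs_le.mp hP0
      refine ⟨⟨le_of_eq hpf0.symm, by rw [hpf0]; exact zero_le_one⟩, ?_, ?_, ?_⟩
      · rw [hpf0, hw0]
        exact hP0.trans (by linarith)
      · intro j _ hj
        rw [hpf0]
        have := (hwmem j hj).1
        linarith [h0.2]
      · intro p hp0 hp1
        rw [hw0]
        have := (hPr p (le_trans (le_of_eq hpf0.symm) hp0) hp1).1
        linarith
    | succ n ih =>
      intro hn1
      have hn : n ≤ N := by omega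
      obtain ⟨⟨hb0, hb1⟩, hI1, hI2, hI3⟩ := ih hn
      by_cases hc : (w n < w (n+1)) ∧ (Icc (pf n) 1 ∩ {p | P p ≤ w (n+1) - v}).Nonempty
      · obtain ⟨hg1, hg2, hg3, hg4, hg5⟩ := hSfacts n (pf n) hn1 hb0 hb1 hc.2
        have hpeq : pf (n+1) = sSup (Icc (pf n) 1 ∩ {p | P p ≤ w (n+1) - v}) := by
          rw [hpfsucc]; exact if_pos hc
        rw [hpeq]
        refine ⟨⟨le_trans hb0 hg1, hg2⟩, ?_, ?_, ?_⟩
        · rw [hg4]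
          rw [show w (n+1) - v - w (n+1) = -v by ring, abs_neg, abs_of_nonneg hv0.le]
        · intro j hj hjN
          rw [hg4]
          have := hwF2 (n+1) j hj hjN
          linarith
        · intro p hp hp1
          rcases eq_or_lt_of_le hp with h | h
          · rw [← h, hg4]
          · linarith [hg5 p h hp1]
      · have hpeq : pf (n+1) = pf n := by rw [hpfsucc]; exact if_neg hc
        rw [hpeq]
        have hI1' : |P (pf n) - w (n+1)| ≤ v := by
          rcases le_or_gt (w (n+1)) (w n) with hfall | hrise
          · rw [abs_le]
            constructor
            · have := (abs_le.mp hI1).1; linarith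
            · have := hI2 (n+1) (by omega) hn1; linarith
          · have hnotmem : ∀ p, pf n ≤ p → p ≤ 1 → w (n+1) - v < P p := by
              intro p hp hp1
              by_contra hcon
              push_neg at hcon
              exact hc ⟨hrise, ⟨p, ⟨⟨hp, hp1⟩, hcon⟩⟩⟩
            rw [abs_le]
            constructor
            · have := hnotmem (pf n) le_rfl hb1; linarith
            · have := (abs_le.mp hI1).2
              linarith
        refine ⟨⟨hb0, hb1⟩, hI1', ?_, ?_⟩
        · intro j hj hjN; exact hI2 j (by omega) hjN
        · intro p hp hp1
          rcases le_or_gt (w (n+1)) (w n) with hfall | hrise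
          · have := hI3 p hp hp1; linarith
          · have : w (n+1) - v < P p := by
              by_contra hcon
              push_neg at hcon
              exact hc ⟨hrise, ⟨p, ⟨⟨hp, hp1⟩, hcon⟩⟩⟩
            linarith
  -- L stays between the node values
  have hLbet : ∀ i t, τ i ≤ t → t ≤ τ (i+1) →
      min (w i) (w (i+1)) ≤ w i + (t - τ i) * (N:ℝ) * (w (i+1) - w i) ∧
      w i + (t - τ i) * (N:ℝ) * (w (i+1) - w i) ≤ max (w i) (w (i+1)) := by
    intro i t h1 h2
    have hs1 : 0 ≤ (t - τ i) * (N:ℝ) := mul_nonneg (by linarith) hNpos.le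
    have hs2 : (t - τ i) * (N:ℝ) ≤ 1 := by
      have h3 : t - τ i ≤ 1/(N:ℝ) := by rw [hτsucc] at h2; linarith
      calc (t - τ i) * (N:ℝ) ≤ (1/(N:ℝ)) * (N:ℝ) := mul_le_mul_of_nonneg_right h3 hNpos.le
        _ = 1 := by field_simp
    rcases le_total (w i) (w (i+1)) with h | h
    · rw [min_eq_left h, max_eq_right h]
      constructor
      · nlinarith [mul_nonneg hs1 (by linarith : (0:ℝ) ≤ w (i+1) - w i)]
      · nlinarith [mul_nonneg (by linarith : (0:ℝ) ≤ 1 - (t - τ i) * (N:ℝ))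
          (by linarith : (0:ℝ) ≤ w (i+1) - w i)]
    · rw [min_eq_right h, max_eq_left h]
      constructor
      · nlinarith [mul_nonneg (by linarith : (0:ℝ) ≤ 1 - (t - τ i) * (N:ℝ))
          (by linarith : (0:ℝ) ≤ w i - w (i+1))]
      · nlinarith [mul_nonneg hs1 (by linarith : (0:ℝ) ≤ w i - w (i+1))]
  -- per-piece matchings
  have hCpos : (0:ℝ) < b - a + δ + 1 := by linarith
  set C : ℝ := b - a + δ + 1 with hCdef
  set θ : ℝ := min (1/2) (κ / C) with hθdef
  have hθ0 : 0 < θ := lt_min (by norm_num) (by positivity)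
  have hθ1 : θ ≤ 1/2 := min_le_left _ _
  have hθC : θ * C ≤ κ := by
    calc θ * C ≤ (κ / C) * C := mul_le_mul_of_nonneg_right (min_le_right _ _) hCpos.le
      _ = κ := by field_simp
  have hG : ∀ i : ℕ, ∃ Gi : ℝ → ℝ, Continuous Gi ∧ Monotone Gi ∧
      (i + 1 ≤ N → ((∀ t, t ≤ τ i → Gi t = pf i) ∧ (∀ t, τ (i+1) ≤ t → Gi t = pf (i+1)) ∧
        (∀ t, pf i ≤ Gi t ∧ Gi t ≤ pf (i+1)) ∧
        (∀ t, τ i ≤ t → t ≤ τ (i+1) →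
          |P (Gi t) - (w i + (t - τ i) * (N:ℝ) * (w (i+1) - w i))| ≤ v + κ))) := by
    intro i
    by_cases hiN : i + 1 ≤ N
    swap
    · exact ⟨fun _ => pf i, continuous_const, monotone_const, fun h => absurd h hiN⟩
    obtain ⟨⟨hb0, hb1⟩, hI1, hI2, hI3⟩ := hInv i (by omega)
    obtain ⟨⟨hb0', hb1'⟩, hI1', hI2', hI3'⟩ := hInv (i+1) hiN
    by_cases hc : (w i < w (i+1)) ∧ (Icc (pf i) 1 ∩ {p | P p ≤ w (i+1) - v}).Nonempty ∧
        pf i < sSup (Icc (pf i) 1 ∩ {p | P p ≤ w (i+1) - v})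
    case neg =>
      have hpeq : pf (i+1) = pf i := by
        by_cases hc2 : (w i < w (i+1)) ∧ (Icc (pf i) 1 ∩ {p | P p ≤ w (i+1) - v}).Nonempty
        · have hnlt : ¬ pf i < sSup (Icc (pf i) 1 ∩ {p | P p ≤ w (i+1) - v}) := fun h =>
            hc ⟨hc2.1, hc2.2, h⟩
          have hge := (hSfacts i (pf i) hiN hb0 hb1 hc2.2).1
          rw [hpfsucc, if_pos hc2]
          exact le_antisymm (not_lt.mp hnlt) hge
        · rw [hpfsucc, if_neg hc2]
      refine ⟨fun _ => pf i, continuous_const, monotone_const,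
        fun _ => ⟨fun _ _ => rfl, fun _ _ => hpeq.symm, fun t => ⟨le_rfl, by rw [hpeq]⟩, ?_⟩⟩
      intro t ht1 ht2
      have hL := hLbet i t ht1 ht2
      have hI1'' : |P (pf i) - w (i+1)| ≤ v := by rw [← hpeq]; exact hI1'
      exact (fdp_abs_le_of_between hI1 hI1'' hL.1 hL.2).trans (by linarith)
    case pos =>
    obtain ⟨hrise, hne, hlt⟩ := hc
    have hpeq : pf (i+1) = sSup (Icc (pf i) 1 ∩ {p | P p ≤ w (i+1) - v}) := by
      rw [hpfsucc, if_pos ⟨hrise, hne⟩]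
    obtain ⟨hg1, hg2, hg3, hg4, hg5⟩ := hSfacts i (pf i) hiN hb0 hb1 hne
    obtain ⟨Gi, hGc, hGm, hGl, hGr, hGb, hGw⟩ := fdp_piece_rise P hPc hUC δ v κ C θ hδ hvδ hκ0
      (w i) (w (i+1)) hrise (pf i) (sSup (Icc (pf i) 1 ∩ {p | P p ≤ w (i+1) - v}))
      hb0 hlt hg2 (τ i) (N:ℝ) hNpos a b (by rw [hCdef]; linarith) hab
      ((hwmem i (by omega)).1) ((hwmem (i+1) hiN).2)
      hθ0 hθ1 hθC hg4 hI1 hI3 hP2 hPr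
    refine ⟨Gi, hGc, hGm, fun _ => ⟨hGl, ?_, ?_, ?_⟩⟩
    · intro t ht
      rw [hpeq]
      exact hGr t (by rw [hτsucc] at ht; exact ht)
    · intro t
      exact ⟨(hGb t).1, by rw [hpeq]; exact (hGb t).2⟩
    · intro t ht1 ht2
      exact hGw t ht1 (by rw [hτsucc] at ht2; exact ht2)
  choose G hGcont hGmono hGprop using hG
  set F : ℝ → ℝ := fun t => ∑ i ∈ Finset.range N, (G i t - pf i) with hFdef
  have hFcont : Continuous F := by
    simp only [hFdef]
    apply continuous_finset_sum
    intro i _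
    exact (hGcont i).sub continuous_const
  have hFmono : Monotone F := by
    intro s t h
    simp only [hFdef]
    apply Finset.sum_le_sum
    intro i _
    have := hGmono i h
    linarith
  have hFeval : ∀ j, j + 1 ≤ N → ∀ t, τ j ≤ t → t ≤ τ (j+1) → F t = G j t := by
    intro j hj t ht1 ht2
    have hcongr : ∀ i ∈ Finset.range N, G i t - pf i =
        (if i < j then pf (i+1) - pf i else if i = j then G j t - pf j else 0) := by
      intro i hi
      rw [Finset.mem_range] at hi
      rcases lt_trichotomy i j with h | h | h
      · rw [if_pos h]
        have h1 := (hGprop i (by omega)).2.1 t (le_trans (hτmono (i+1) j (by omega)) ht1)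
        rw [h1]
      · subst h
        rw [if_neg (lt_irrefl i), if_pos rfl]
      · rw [if_neg (by omega), if_neg (by omega)]
        have h1 := (hGprop i (by omega)).1 t (le_trans ht2 (hτmono (j+1) i (by omega)))
        rw [h1]
        ring
    simp only [hFdef]
    rw [Finset.sum_congr rfl hcongr]
    rw [← Finset.sum_range_add_sum_Ico _ (by omega : j + 1 ≤ N)]
    have hz : (∑ i ∈ Finset.Ico (j+1) N,
        (if i < j then pf (i+1) - pf i else if i = j then G j t - pf j else 0)) = 0 := by
      apply Finset.sum_eq_zero
      intro i hi
      rw [Finset.mem_Ico] at hi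
      rw [if_neg (by omega), if_neg (by omega)]
    rw [hz, add_zero, Finset.sum_range_succ, if_neg (lt_irrefl j), if_pos rfl]
    have hfirst : (∑ i ∈ Finset.range j,
        (if i < j then pf (i+1) - pf i else if i = j then G j t - pf j else 0)) =
        ∑ i ∈ Finset.range j, (pf (i+1) - pf i) := by
      apply Finset.sum_congr rfl
      intro i hi
      rw [if_pos (Finset.mem_range.mp hi)]
    rw [hfirst, Finset.sum_range_sub (fun i => pf i), hpf0]
    ring
  have hcover : ∀ t : ℝ, 0 ≤ t → t ≤ 1 → ∃ j : ℕ, j + 1 ≤ N ∧ τ j ≤ t ∧ t ≤ τ (j+1) := by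
    intro t h0 h1
    have hmin : min (N-1) (Nat.floor (t * (N:ℝ))) ≤ N - 1 := min_le_left _ _
    refine ⟨min (N-1) (Nat.floor (t * (N:ℝ))), by omega, ?_, ?_⟩
    · simp only [hτdef]
      rw [div_le_iff₀ hNpos]
      have h2 : ((min (N-1) (Nat.floor (t * (N:ℝ))) : ℕ) : ℝ) ≤
          ((Nat.floor (t * (N:ℝ)) : ℕ) : ℝ) := by
        exact_mod_cast min_le_right (N-1) (Nat.floor (t * (N:ℝ)))
      calc ((min (N-1) (Nat.floor (t * (N:ℝ))) : ℕ) : ℝ) ≤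
          ((Nat.floor (t * (N:ℝ)) : ℕ) : ℝ) := h2
        _ ≤ t * (N:ℝ) := Nat.floor_le (by positivity)
    · rcases le_or_gt (Nat.floor (t * (N:ℝ))) (N-1) with hcase | hcase
      · have hjf : min (N-1) (Nat.floor (t * (N:ℝ))) = Nat.floor (t * (N:ℝ)) :=
          min_eq_right hcase
        rw [hjf]
        simp only [hτdef]
        rw [le_div_iff₀ hNpos]
        push_cast
        have := Nat.lt_floor_add_one (t * (N:ℝ))
        linarith
      · have hjf : min (N-1) (Nat.floor (t * (N:ℝ))) = N - 1 := min_eq_left (by omega)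
        rw [hjf]
        have hN' : N - 1 + 1 = N := by omega
        rw [hN']
        rw [← hτN] at h1
        exact h1
  have hFrange : ∀ t, 0 ≤ F t ∧ F t ≤ 1 := by
    intro t
    constructor
    · simp only [hFdef]
      apply Finset.sum_nonneg
      intro i hi
      have := ((hGprop i (by rw [Finset.mem_range] at hi; omega)).2.2.1 t).1
      linarith
    · have hle : F t ≤ pf N := by
        simp only [hFdef]
        calc (∑ i ∈ Finset.range N, (G i t - pf i)) ≤
            ∑ i ∈ Finset.range N, (pf (i+1) - pf i) := by
              apply Finset.sum_le_sum
              intro i hi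
              have := ((hGprop i (by rw [Finset.mem_range] at hi; omega)).2.2.1 t).2
              linarith
          _ = pf N - pf 0 := Finset.sum_range_sub (fun i => pf i) N
          _ = pf N := by rw [hpf0]; ring
      exact hle.trans ((hInv N le_rfl).1.2)
  have hF0 : F 0 = 0 := by
    have h1 := hFeval 0 (by omega) 0 (le_of_eq hτ0) ((hτmem 1 (by omega)).1)
    rw [h1, (hGprop 0 (by omega)).1 0 (le_of_eq hτ0.symm), hpf0]
  have hF1 : F 1 = pf N := by
    have hN' : N - 1 + 1 = N := by omega
    have h1 := hFeval (N-1) (by omega) 1 (by rw [← hτN]; exact hτmono _ _ (by omega))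
      (by rw [hN', hτN])
    rw [h1]
    have h2 := (hGprop (N-1) (by omega)).2.1 1 (by rw [hN', hτN])
    rw [h2, hN']
  have hFwidth : ∀ t, 0 ≤ t → t ≤ 1 → |P (F t) - Q t| ≤ δ + η := by
    intro t h0 h1
    obtain ⟨j, hj, hj1, hj2⟩ := hcover t h0 h1
    rw [hFeval j hj t hj1 hj2]
    have hwid := (hGprop j hj).2.2.2 t hj1 hj2
    have hA : |Q t - w j| ≤ η/8 := by
      have hdist : |t - τ j| < d := by
        rw [abs_of_nonneg (by linarith)]
        rw [hτsucc] at hj2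
        linarith
      exact (hdm t (τ j) h0 h1 (hτmem j (by omega)).1 (hτmem j (by omega)).2 hdist).le
    have hB : |(t - τ j) * (N:ℝ) * (w (j+1) - w j)| ≤ η/8 := by
      rw [abs_mul]
      have h2' : |(t - τ j) * (N:ℝ)| ≤ 1 := by
        rw [abs_of_nonneg (mul_nonneg (by linarith) hNpos.le)]
        have h3 : t - τ j ≤ 1/(N:ℝ) := by rw [hτsucc] at hj2; linarith
        calc (t - τ j) * (N:ℝ) ≤ (1/(N:ℝ)) * (N:ℝ) := mul_le_mul_of_nonneg_right h3 hNpos.le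
          _ = 1 := by field_simp
      calc |(t - τ j) * (N:ℝ)| * |w (j+1) - w j| ≤ 1 * |w (j+1) - w j| :=
            mul_le_mul_of_nonneg_right h2' (abs_nonneg _)
        _ = |w (j+1) - w j| := one_mul _
        _ ≤ η/8 := hwmesh j hj
    have hQL : |Q t - (w j + (t - τ j) * (N:ℝ) * (w (j+1) - w j))| ≤ η/4 := by
      have heq : Q t - (w j + (t - τ j) * (N:ℝ) * (w (j+1) - w j)) =
          (Q t - w j) + (-((t - τ j) * (N:ℝ) * (w (j+1) - w j))) := by ring
      rw [heq]
      calc |(Q t - w j) + (-((t - τ j) * (N:ℝ) * (w (j+1) - w j)))| ≤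
          |Q t - w j| + |(-((t - τ j) * (N:ℝ) * (w (j+1) - w j)))| := abs_add_le _ _
        _ = |Q t - w j| + |(t - τ j) * (N:ℝ) * (w (j+1) - w j)| := by rw [abs_neg]
        _ ≤ η/8 + η/8 := add_le_add hA hB
        _ = η/4 := by ring
    calc |P (G j t) - Q t| ≤ |P (G j t) - (w j + (t - τ j) * (N:ℝ) * (w (j+1) - w j))| +
        |(w j + (t - τ j) * (N:ℝ) * (w (j+1) - w j)) - Q t| := abs_sub_le _ _ _
      _ ≤ (v + κ) + η/4 := add_le_add hwid (by rw [abs_sub_comm]; exact hQL)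
      _ ≤ δ + η := by rw [hvdef, hκdef]; linarith
  have hFtail : ∀ p, F 1 ≤ p → p ≤ 1 → |P p - b| ≤ δ + η := by
    intro p hp1 hp2
    rw [hF1] at hp1
    obtain ⟨⟨hN0, hN1'⟩, -, -, hI3N⟩ := hInv N le_rfl
    have hlow := hI3N p hp1 hp2
    rw [hwN] at hlow
    have hup := (hPr p (le_trans hN0 hp1) hp2).2
    rw [abs_le]
    constructor
    · rw [hvdef] at hlow; linarith
    · linarith
  exact ⟨F, hFcont, hFmono, hF0, hFrange, hFwidth, hFtail⟩

private lemma fdp_main_lt (δ : ℝ) (hδ : 0 < δ) (a b : ℝ) (hab : a < b)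
    (Q : unitInterval → ℝ) (hQc : Continuous Q) (hQ0 : Q 0 = a) (hQ1 : Q 1 = b)
    (hQr : ∀ t : unitInterval, a ≤ Q t ∧ Q t ≤ b)
    (hQX : frechetDist Q (segCurve a b) ≤ δ)
    (P : unitInterval → ℝ) (hPc : Continuous P)
    (hPX : frechetDist P (segCurve a b) ≤ δ) : frechetDist P Q ≤ δ := by
  obtain ⟨hP0, hP1, hPrange, hP2⟩ := fdp_seg_facts hPc hab.le hPX
  obtain ⟨-, -, -, hQ2⟩ := fdp_seg_facts hQc hab.le hQX
  have hUCgen : ∀ (R : unitInterval → ℝ), Continuous R → ∀ ε : ℝ, 0 < ε → ∃ d : ℝ, 0 < d ∧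
      ∀ q q' : ℝ, 0 ≤ q → q ≤ 1 → 0 ≤ q' → q' ≤ 1 → |q - q'| < d →
        |R (projIcc 0 1 zero_le_one q) - R (projIcc 0 1 zero_le_one q')| < ε := by
    intro R hR ε hε
    have huc : UniformContinuous R := CompactSpace.uniformContinuous_of_continuous hR
    obtain ⟨d, hd, hduc⟩ := Metric.uniformContinuous_iff.mp huc ε hε
    refine ⟨d, hd, fun q q' h0 h1 h0' h1' hqq => ?_⟩
    have hd2 : dist (projIcc 0 1 zero_le_one q) (projIcc 0 1 zero_le_one q') < d := by
      rw [Subtype.dist_eq, projIcc_of_mem zero_le_one ⟨h0, h1⟩,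
        projIcc_of_mem zero_le_one ⟨h0', h1'⟩]
      rw [Real.dist_eq]
      exact hqq
    have := hduc hd2
    rwa [Real.dist_eq] at this
  apply fdp_fd_le_forall
  intro η hη
  obtain ⟨F, hFc, hFm, hF0, hFrange, hFwidth, hFtail⟩ := fdp_core a b δ η hab hδ hη
    (fun r => P (projIcc 0 1 zero_le_one r)) (fun r => Q (projIcc 0 1 zero_le_one r))
    (hPc.comp continuous_projIcc)
    (hUCgen P hPc) (hUCgen Q hQc)
    (by show Q (projIcc 0 1 zero_le_one (0:ℝ)) = a
        rw [fdp_projIcc_zero]; exact hQ0)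
    (by show Q (projIcc 0 1 zero_le_one (1:ℝ)) = b
        rw [fdp_projIcc_one]; exact hQ1)
    (by
      intro s t h0 hst h1
      show Q (projIcc 0 1 zero_le_one s) ≤ Q (projIcc 0 1 zero_le_one t) + 2 * δ
      rw [projIcc_of_mem zero_le_one ⟨h0, hst.trans h1⟩,
        projIcc_of_mem zero_le_one ⟨h0.trans hst, h1⟩]
      exact hQ2 _ _ (Subtype.mk_le_mk.mpr hst))
    (by
      intro t h0 h1
      show a ≤ Q (projIcc 0 1 zero_le_one t) ∧ Q (projIcc 0 1 zero_le_one t) ≤ b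
      rw [projIcc_of_mem zero_le_one ⟨h0, h1⟩]
      exact hQr _)
    (by show |P (projIcc 0 1 zero_le_one (0:ℝ)) - a| ≤ δ
        rw [fdp_projIcc_zero]; exact hP0)
    (by show b - δ ≤ P (projIcc 0 1 zero_le_one (1:ℝ))
        rw [fdp_projIcc_one]; have := (abs_le.mp hP1).1; linarith)
    (by
      intro t h0 h1
      show a - δ ≤ P (projIcc 0 1 zero_le_one t) ∧ P (projIcc 0 1 zero_le_one t) ≤ b + δ
      rw [projIcc_of_mem zero_le_one ⟨h0, h1⟩]
      exact hPrange _)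
    (by
      intro s t h0 hst h1
      show P (projIcc 0 1 zero_le_one s) ≤ P (projIcc 0 1 zero_le_one t) + 2 * δ
      rw [projIcc_of_mem zero_le_one ⟨h0, hst.trans h1⟩,
        projIcc_of_mem zero_le_one ⟨h0.trans hst, h1⟩]
      exact hP2 _ _ (Subtype.mk_le_mk.mpr hst))
  have hmemf : ∀ s : unitInterval,
      (if (s:ℝ) ≤ 1/2 then F (2*(s:ℝ)) else F 1 + (2*(s:ℝ) - 1) * (1 - F 1)) ∈
        Icc (0:ℝ) 1 := by
    intro s
    split_ifs with hs
    · exact ⟨(hFrange _).1, (hFrange _).2⟩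
    · push_neg at hs
      have h1 := s.2.1
      have h2 := s.2.2
      have h3 := hFrange 1
      constructor
      · nlinarith [h3.1, h3.2]
      · nlinarith [h3.1, h3.2]
  set f : unitInterval → unitInterval := fun s =>
    ⟨if (s:ℝ) ≤ 1/2 then F (2*(s:ℝ)) else F 1 + (2*(s:ℝ) - 1) * (1 - F 1), hmemf s⟩
    with hfdef
  have hmemg : ∀ s : unitInterval, min (2*(s:ℝ)) 1 ∈ Icc (0:ℝ) 1 := by
    intro s
    have h1 := s.2.1
    exact ⟨le_min (by linarith) zero_le_one, min_le_right _ _⟩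
  set g : unitInterval → unitInterval := fun s => ⟨min (2*(s:ℝ)) 1, hmemg s⟩ with hgdef
  have hfcont : Continuous f := by
    apply Continuous.subtype_mk
    apply Continuous.if_le
    · exact hFc.comp (continuous_const.mul continuous_subtype_val)
    · exact continuous_const.add
        (((continuous_const.mul continuous_subtype_val).sub continuous_const).mul
          continuous_const)
    · exact continuous_subtype_val
    · exact continuous_const
    · intro s hs
      rw [hs]
      norm_num
  have hgcont : Continuous g :=
    ((continuous_const.mul continuous_subtype_val).min continuous_const).subtype_mk _
  have hfmono : Monotone f := by
    intro s t hst
    have hst' : (s:ℝ) ≤ (t:ℝ) := hst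
    simp only [hfdef]
    rw [Subtype.mk_le_mk]
    have h3 := hFrange 1
    have hs2 := s.2.2
    have ht2 := t.2.2
    split_ifs with h1 h2 h2
    · exact hFm (by linarith)
    · push_neg at h2
      have hF2s : F (2*(s:ℝ)) ≤ F 1 := hFm (by linarith)
      nlinarith
    · exact absurd (hst'.trans h2) h1
    · nlinarith
  have hgmono : Monotone g := by
    intro s t hst
    have hst' : (s:ℝ) ≤ (t:ℝ) := hst
    simp only [hgdef]
    rw [Subtype.mk_le_mk]
    exact min_le_min (by linarith) le_rfl
  have hf0 : f 0 = 0 := by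
    apply Subtype.ext
    simp only [hfdef]
    show (if (0:ℝ) ≤ 1/2 then F (2*(0:ℝ)) else F 1 + (2*(0:ℝ) - 1) * (1 - F 1)) = (0:ℝ)
    rw [if_pos (by norm_num : (0:ℝ) ≤ 1/2)]
    rw [show (2*(0:ℝ)) = 0 by norm_num]
    exact hF0
  have hf1 : f 1 = 1 := by
    apply Subtype.ext
    simp only [hfdef]
    show (if (1:ℝ) ≤ 1/2 then F (2*(1:ℝ)) else F 1 + (2*(1:ℝ) - 1) * (1 - F 1)) = (1:ℝ)
    rw [if_neg (by norm_num)]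
    ring
  have hg0 : g 0 = 0 := by
    apply Subtype.ext
    simp only [hgdef]
    show min (2*(0:ℝ)) 1 = (0:ℝ)
    norm_num
  have hg1 : g 1 = 1 := by
    apply Subtype.ext
    simp only [hgdef]
    show min (2*(1:ℝ)) 1 = (1:ℝ)
    norm_num
  refine ⟨f, g, hfcont, hfmono, fdp_surj_of_cont_mono hfcont hf0 hf1,
    hgcont, hgmono, fdp_surj_of_cont_mono hgcont hg0 hg1, ?_⟩
  intro t
  rcases le_or_gt ((t:ℝ)) (1/2) with hc | hc
  · have ht1 := t.2.1
    have hmem2t : 2*(t:ℝ) ∈ Icc (0:ℝ) 1 := ⟨by linarith, by linarith⟩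
    have e1 : f t = projIcc 0 1 zero_le_one (F (2*(t:ℝ))) := by
      apply Subtype.ext
      simp only [hfdef]
      rw [Set.coe_projIcc]
      show (if (t:ℝ) ≤ 1/2 then F (2*(t:ℝ)) else F 1 + (2*(t:ℝ) - 1) * (1 - F 1)) =
        max 0 (min 1 (F (2*(t:ℝ))))
      rw [if_pos hc]
      have h := hFrange (2*(t:ℝ))
      rw [min_eq_right h.2, max_eq_right h.1]
    have e2 : g t = projIcc 0 1 zero_le_one (2*(t:ℝ)) := by
      apply Subtype.ext
      simp only [hgdef]
      rw [Set.coe_projIcc]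
      show min (2*(t:ℝ)) 1 = max 0 (min 1 (2*(t:ℝ)))
      rw [min_comm, max_eq_right (le_min zero_le_one (by linarith))]
    rw [e1, e2, Real.dist_eq]
    exact hFwidth (2*(t:ℝ)) (by linarith) (by linarith)
  · have ht1 := t.2.1
    have ht2 := t.2.2
    have h3 := hFrange 1
    have hval : F 1 ≤ F 1 + (2*(t:ℝ) - 1) * (1 - F 1) ∧
        F 1 + (2*(t:ℝ) - 1) * (1 - F 1) ≤ 1 := by
      constructor
      · nlinarith [h3.1, h3.2]
      · nlinarith [h3.1, h3.2]
    have hmemv : F 1 + (2*(t:ℝ) - 1) * (1 - F 1) ∈ Icc (0:ℝ) 1 :=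
      ⟨le_trans h3.1 hval.1, hval.2⟩
    have e1 : f t = projIcc 0 1 zero_le_one (F 1 + (2*(t:ℝ) - 1) * (1 - F 1)) := by
      apply Subtype.ext
      simp only [hfdef]
      rw [Set.coe_projIcc]
      show (if (t:ℝ) ≤ 1/2 then F (2*(t:ℝ)) else F 1 + (2*(t:ℝ) - 1) * (1 - F 1)) =
        max 0 (min 1 (F 1 + (2*(t:ℝ) - 1) * (1 - F 1)))
      rw [if_neg (not_le.mpr hc)]
      rw [min_eq_right hmemv.2, max_eq_right hmemv.1]
    have e2 : g t = 1 := by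
      apply Subtype.ext
      simp only [hgdef]
      show min (2*(t:ℝ)) 1 = (1:ℝ)
      rw [min_eq_right (by linarith)]
    rw [e1, e2, hQ1, Real.dist_eq]
    exact hFtail _ hval.1 hval.2


/-- If `Q` starts at `a`, ends at `b`, stays in the interval spanned
by `a` and `b` and satisfies `d_F(Q, X) ≤ δ` for the segment `X` from `a` to `b`,
then every curve `P` with `d_F(P, X) ≤ δ` also satisfies `d_F(P, Q) ≤ δ`. -/
theorem frechetDist_le_of_segment_proxy (δ : ℝ) (hδ : 0 < δ) (a b : ℝ)
    (Q : unitInterval → ℝ) (hQc : Continuous Q)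
    (hQ0 : Q 0 = a) (hQ1 : Q 1 = b)
    (hQr : ∀ t : unitInterval, Q t ∈ Set.uIcc a b)
    (hQX : frechetDist Q (segCurve a b) ≤ δ)
    (P : unitInterval → ℝ) (hPc : Continuous P)
    (hPX : frechetDist P (segCurve a b) ≤ δ) :
    frechetDist P Q ≤ δ := by
  rcases lt_trichotomy a b with hab | hab | hab
  · apply fdp_main_lt δ hδ a b hab Q hQc hQ0 hQ1 _ hQX P hPc hPX
    intro t
    have h := hQr t
    rw [Set.uIcc_of_le hab.le, Set.mem_Icc] at h
    exact h
  · subst hab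
    have hQeq : Q = segCurve a a := by
      funext t
      have h := hQr t
      rw [Set.uIcc_self, Set.mem_singleton_iff] at h
      rw [h, fdp_segCurve_apply]
      ring
    rw [hQeq]
    exact hPX
  · have hsegneg : (segCurve (-a) (-b) : unitInterval → ℝ) = fun t => -(segCurve a b t) := by
      funext t
      rw [fdp_segCurve_apply, fdp_segCurve_apply]
      ring
    have h1 : frechetDist (fun t => -(Q t)) (segCurve (-a) (-b)) ≤ δ := by
      rw [hsegneg, fdp_fd_neg]
      exact hQX
    have h2 : frechetDist (fun t => -(P t)) (segCurve (-a) (-b)) ≤ δ := by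
      rw [hsegneg, fdp_fd_neg]
      exact hPX
    have h3 := fdp_main_lt δ hδ (-a) (-b) (by linarith) (fun t => -(Q t)) hQc.neg
      (by show -(Q 0) = -a; rw [hQ0]) (by show -(Q 1) = -b; rw [hQ1])
      (by
        intro t
        have h := hQr t
        rw [Set.mem_uIcc] at h
        show -a ≤ -(Q t) ∧ -(Q t) ≤ -b
        constructor
        · rcases h with ⟨h1', h2'⟩ | ⟨h1', h2'⟩ <;> linarith
        · rcases h with ⟨h1', h2'⟩ | ⟨h1', h2'⟩ <;> linarith)
      h1 (fun t => -(P t)) hPc.neg h2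
    rw [← fdp_fd_neg P Q]
    exact h3
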